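/- Fix an integer n ≥ 1 and a real number A such that either n is even and A = 2·sin(jπ/n) for some integer j with 0 ≤ j ≤ (n−2)/2, or n is odd and A = 2·sin((2j+1)π/(2n)) for some integer j with 0 ≤ j ≤ (n−3)/2. Then for every real θ, Q(p n (A·exp(iθ) + exp(−2iθ))) = 0; that is, every point of the curve parameterized by A·exp(iθ) + exp(−2iθ) is mapped by p_n onto the standard deltoid. (For A = 1 this curve is a trifolium.) -/
import Mathlib


open Complex ComplexConjugate

/-- `Q z = z²·conj(z)² − 4(z³ + conj(z)³) + 18·z·conj(z) − 27`;
the standard deltoid is `{z : ℂ | Q z = 0}`. -/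
noncomputable def Q (z : ℂ) : ℂ :=
  z ^ 2 * (conj z) ^ 2 - 4 * (z ^ 3 + (conj z) ^ 3) + 18 * z * conj z - 27

/-- `p 0 z = 3`, `p 1 z = z`, `p 2 z = z² − 2·conj z`, and
`p n z = z·p (n−1) z − conj z·p (n−2) z + p (n−3) z` for `n ≥ 3`. -/
noncomputable def p : ℕ → ℂ → ℂ
  | 0, _ => 3
  | 1, z => z
  | 2, z => z ^ 2 - 2 * conj z
  | (n + 3), z => z * p (n + 2) z - conj z * p (n + 1) z + p n z

/-- Closed form for `p n` on points `u + v + conj u · conj v` with `u, v` unimodular. -/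
lemma p_closed (u v : ℂ) (hu : u * conj u = 1) (hv : v * conj v = 1) :
    ∀ n : ℕ, p n (u + v + conj u * conj v) =
      u ^ n + v ^ n + (conj u) ^ n * (conj v) ^ n := by
  have hz : conj (u + v + conj u * conj v) = conj u + conj v + u * v := by
    simp [map_add, map_mul]
  intro n
  induction n using Nat.strong_induction_on with
  | _ n ih =>
    rcases n with _ | _ | _ | k
    · simp [p]; norm_num
    · simp [p]
    · rw [p, hz]
      linear_combination (2 * conj v) * hu + (2 * conj u) * hv
    · have h0 := ih k (by omega)
      have h1 := ih (k+1) (by omega)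
      have h2 := ih (k+2) (by omega)
      rw [p, hz, h0, h1, h2]
      linear_combination
        (u ^ k * (conj v * u - 1) +
          (conj u) ^ k * (conj v) ^ k * (conj u * (conj v) ^ 2 - conj v * v)) * hu +
        (v ^ k * (conj u * v - 1) +
          (conj u) ^ k * (conj v) ^ k * ((conj u) ^ 2 * conj v - 1)) * hv

/-- Points of the form `2U + conj(U)²` with `U` unimodular lie on the deltoid. -/
lemma Q_double (U : ℂ) (hU : U * conj U = 1) : Q (2 * U + (conj U) ^ 2) = 0 := by
  have hz : conj (2 * U + (conj U) ^ 2) = 2 * conj U + U ^ 2 := by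
    simp [map_add, map_mul, map_pow, map_ofNat]
  unfold Q
  rw [hz]
  linear_combination ((U * conj U) ^ 3 + 17 * (U * conj U) ^ 2 - 45 * (U * conj U) + 27
    + 4 * (U ^ 3 + (conj U) ^ 3) * (U * conj U - 1)) * hU

lemma conj_exp_real_mul_I (x : ℝ) : conj (exp ((x:ℂ) * I)) = exp (-(x:ℂ) * I) := by
  rw [← Complex.exp_conj]
  congr 1
  simp [map_mul, Complex.conj_ofReal, Complex.conj_I]

lemma unit_exp (x : ℝ) : exp ((x:ℂ) * I) * conj (exp ((x:ℂ) * I)) = 1 := by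
  rw [conj_exp_real_mul_I, ← Complex.exp_add]
  norm_num

/-- If `n` is even and `A = 2·sin(jπ/n)` with `0 ≤ j ≤ (n−2)/2`, or `n` is odd and
`A = 2·sin((2j+1)π/(2n))` with `0 ≤ j ≤ (n−3)/2`, then the curve
`A·exp(iθ) + exp(−2iθ)` is mapped by `p n` onto the standard deltoid. -/
theorem curves_mapped_to_deltoid (n : ℕ) (hn : 1 ≤ n) (A : ℝ)
    (hA : (Even n ∧ ∃ j : ℕ, 2 * j + 2 ≤ n ∧ A = 2 * Real.sin (j * Real.pi / n)) ∨
          (Odd n ∧ ∃ j : ℕ, 2 * j + 3 ≤ n ∧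
            A = 2 * Real.sin ((2 * j + 1) * Real.pi / (2 * n)))) :
    ∀ θ : ℝ, Q (p n ((A : ℂ) * exp (I * θ) + exp (-2 * I * θ))) = 0 := by
  -- extract `φ` with `A = 2 sin φ` and `n(2φ − π) ∈ 2πℤ`
  obtain ⟨φ, k, hAφ, hk⟩ : ∃ (φ : ℝ) (k : ℤ), A = 2 * Real.sin φ ∧
      (n:ℝ) * (2 * φ - Real.pi) = (k:ℝ) * (2 * Real.pi) := by
    have hn0 : (n:ℝ) ≠ 0 := by positivity
    rcases hA with ⟨⟨m, hm⟩, j, hj, hAj⟩ | ⟨⟨m, hm⟩, j, hj, hAj⟩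
    · refine ⟨j * Real.pi / n, (j:ℤ) - m, hAj, ?_⟩
      have h2m : (n:ℝ) = 2 * m := by rw [hm]; push_cast; ring
      field_simp
      rw [h2m]
      push_cast
      ring
    · refine ⟨(2 * j + 1) * Real.pi / (2 * n), (j:ℤ) - m, hAj, ?_⟩
      have h2m : (n:ℝ) = 2 * m + 1 := by rw [hm]; push_cast; ring
      field_simp
      rw [h2m]
      push_cast
      ring
  intro θ
  set a : ℝ := θ + (φ - Real.pi/2) with ha
  set b : ℝ := θ - (φ - Real.pi/2) with hb
  set u : ℂ := exp ((a:ℂ) * I) with hu_def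
  set v : ℂ := exp ((b:ℂ) * I) with hv_def
  have hu : u * conj u = 1 := unit_exp a
  have hv : v * conj v = 1 := unit_exp b
  -- the curve point equals `u + v + conj u · conj v`
  have hcurve : (A : ℂ) * exp (I * θ) + exp (-2 * I * θ) = u + v + conj u * conj v := by
    rw [hu_def, hv_def, conj_exp_real_mul_I, conj_exp_real_mul_I, ← Complex.exp_add]
    have h1 : ((a:ℂ) * I) = (θ:ℂ)*I + ((φ - Real.pi/2 : ℝ):ℂ)*I := by
      rw [ha]; push_cast; ring
    have h2 : ((b:ℂ) * I) = (θ:ℂ)*I + (-(((φ - Real.pi/2 : ℝ):ℂ))*I) := by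
      rw [hb]; push_cast; ring
    have h3 : -((a:ℂ)) * I + -((b:ℂ)) * I = -2 * I * θ := by
      rw [ha, hb]; push_cast; ring
    rw [h1, h2, h3, Complex.exp_add, Complex.exp_add, ← mul_add, ← Complex.two_cos,
        ← Complex.ofReal_cos, show φ - Real.pi/2 = -(Real.pi/2 - φ) by ring, Real.cos_neg,
        Real.cos_pi_div_two_sub, hAφ]
    push_cast
    ring
  -- `uⁿ = vⁿ`
  have hpow : u ^ n = v ^ n := by
    rw [hu_def, hv_def, ← Complex.exp_nat_mul, ← Complex.exp_nat_mul]
    have hab : (n:ℝ) * (a - b) = (k:ℝ) * (2 * Real.pi) := by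
      rw [ha, hb]; ring_nf; ring_nf at hk; linarith
    have : (n:ℂ) * ((a:ℂ) * I) = (n:ℂ) * ((b:ℂ) * I) + (k:ℂ) * (2 * Real.pi * I) := by
      have := congrArg (fun x : ℝ => (x:ℂ) * I) hab
      push_cast at this ⊢
      linear_combination this
    rw [this, Complex.exp_add, Complex.exp_int_mul_two_pi_mul_I, mul_one]
  -- conclude
  rw [hcurve, p_closed u v hu hv n]
  have hU : u ^ n * conj (u ^ n) = 1 := by
    rw [map_pow, ← mul_pow, hu, one_pow]
  have key : u ^ n + v ^ n + (conj u) ^ n * (conj v) ^ n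
      = 2 * u ^ n + (conj (u ^ n)) ^ 2 := by
    rw [← map_pow, ← map_pow, ← hpow]
    ring
  rw [key]
  exact Q_double (u ^ n) hU
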